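/- In the modified reduction G'' with ℓ = |R| + Σ_h q^-(h) levels, let M = map(M'') for a stable matching M'' in G''. Then there is no feasible matching N of G with |N| > |M|; i.e., M is a maximum-cardinality feasible matching. -/

import Mathlib

open Finset

attribute [local instance] Classical.propDecidable

namespace HRLQ

variable {R H : Type}

/-- Number of levels in the reduced HR instance (`T = 2` for `G'`, `T = |R|` for `G''`). -/
def ell (H : Type) [Fintype H] (T : ℕ) (qm : H → ℕ) : ℕ := T + ∑ h, qm h

/-- Dummy residents of the reduced instance: a dummy `⟨h, s, i⟩` is the `i`-th level-`s`
dummy resident corresponding to hospital `h`; levels run over `0,…,ℓ-2`, there are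
`q⁺(h)` dummies at levels `< T` and `q⁻(h)` dummies at levels `≥ T`. -/
def Dummy (H : Type) [Fintype H] (T : ℕ) (qp qm : H → ℕ) : Type :=
  {x : Σ h : H, Fin (ell H T qm) × Fin (qp h) //
    x.2.1.val ≤ ell H T qm - 2 ∧ (T ≤ x.2.1.val → x.2.2.val < qm x.1)}

noncomputable instance [Fintype H] (T : ℕ) (qp qm : H → ℕ) : Fintype (Dummy H T qp qm) := by
  classical
  unfold Dummy
  infer_instance

variable [Fintype H]

def Dummy.h {T : ℕ} {qp qm : H → ℕ} (d : Dummy H T qp qm) : H := d.1.1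
def Dummy.s {T : ℕ} {qp qm : H → ℕ} (d : Dummy H T qp qm) : ℕ := d.1.2.1.val
def Dummy.i {T : ℕ} {qp qm : H → ℕ} (d : Dummy H T qp qm) : ℕ := d.1.2.2.val

/-- Residents of the reduced instance: original residents plus dummies. -/
def Res (R H : Type) [Fintype H] (T : ℕ) (qp qm : H → ℕ) : Type := R ⊕ Dummy H T qp qm

/-- Hospitals of the reduced instance: level copies `h^s`, `s ∈ {0,…,ℓ-1}`. -/
def Hos (H : Type) [Fintype H] (T : ℕ) (qm : H → ℕ) : Type := H × Fin (ell H T qm)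

noncomputable instance [Fintype R] (T : ℕ) (qp qm : H → ℕ) : Fintype (Res R H T qp qm) := by
  unfold Res; infer_instance

instance (T : ℕ) (qm : H → ℕ) : Fintype (Hos H T qm) := by
  unfold Hos; infer_instance

/-- Capacity of the level copy `h^s`. -/
def cap (T : ℕ) (qp qm : H → ℕ) (hs : Hos H T qm) : ℕ :=
  if hs.2.val < T then qp hs.1 else qm hs.1

/-- Acceptability (edges) in the reduced instance. A level-`s` dummy of `h` is acceptable to
`h^s` and `h^{s+1}`, except that the first `q⁺(h) - q⁻(h)` dummies at level `T-1` only list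
`h^{T-1}`.  An original resident `r` is acceptable to every copy of each hospital on its list. -/
def edge (T : ℕ) (qp qm : H → ℕ) (E : R → H → Prop) :
    Res R H T qp qm → Hos H T qm → Prop
  | Sum.inl r, hs => E r hs.1
  | Sum.inr d, hs => d.h = hs.1 ∧
      (hs.2.val = d.s ∨
        (hs.2.val = d.s + 1 ∧ ¬(d.s = T - 1 ∧ d.i < qp hs.1 - qm hs.1)))

/-- Rank (smaller = better) that a dummy assigns to hospital copies. -/
noncomputable def dkey {T : ℕ} {qp qm : H → ℕ} (d : Dummy H T qp qm) (a : Hos H T qm) : ℕ :=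
  if a.1 = d.h ∧ a.2.val = d.s then 0
  else if a.1 = d.h ∧ a.2.val = d.s + 1 then 1 else 2

/-- Preferences of residents of the reduced instance over hospital copies:
an original resident prefers higher level copies, and within a level follows its original
ranking `rankR` (smaller rank = more preferred); a level-`s` dummy of `h` has list `⟨h^s, h^{s+1}⟩`. -/
def prefRes (T : ℕ) (qp qm : H → ℕ) (rankR : R → H → ℕ) :
    Res R H T qp qm → Hos H T qm → Hos H T qm → Prop
  | Sum.inl r, a, b => b.2.val < a.2.val ∨ (a.2.val = b.2.val ∧ rankR r a.1 < rankR r b.1)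
  | Sum.inr d, a, b => dkey d a < dkey d b

/-- Preference class of a resident in the list of `h^s`: level-`(s-1)` dummies of `h` first,
then original residents, then level-`s` dummies of `h`. -/
noncomputable def hclass {T : ℕ} {qp qm : H → ℕ} (hs : Hos H T qm) : Res R H T qp qm → ℕ
  | Sum.inl _ => 1
  | Sum.inr d =>
      if d.h = hs.1 ∧ 1 ≤ hs.2.val ∧ d.s = hs.2.val - 1 then 0
      else if d.h = hs.1 ∧ d.s = hs.2.val then 2 else 3

/-- Rank within a preference class. -/
def hinner {T : ℕ} {qp qm : H → ℕ} (rankH : H → R → ℕ) (hs : Hos H T qm) :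
    Res R H T qp qm → ℕ
  | Sum.inl r => rankH hs.1 r
  | Sum.inr d => d.i

/-- Preferences of hospital copies over residents of the reduced instance. -/
def prefHos (T : ℕ) (qp qm : H → ℕ) (rankH : H → R → ℕ) (hs : Hos H T qm)
    (x y : Res R H T qp qm) : Prop :=
  hclass hs x < hclass hs y ∨
    (hclass hs x = hclass hs y ∧ hinner rankH hs x < hinner rankH hs y)

variable [Fintype R]

/-- The set of residents matched to the hospital copy `hs`. -/
noncomputable def mset {T : ℕ} {qp qm : H → ℕ}
    (M : Res R H T qp qm → Option (Hos H T qm)) (hs : Hos H T qm) :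
    Finset (Res R H T qp qm) :=
  univ.filter (fun x => M x = some hs)

/-- `M` is a matching of the reduced (HR) instance: it respects acceptability and capacities. -/
def isMatchingRed (T : ℕ) (qp qm : H → ℕ) (E : R → H → Prop)
    (M : Res R H T qp qm → Option (Hos H T qm)) : Prop :=
  (∀ x hs, M x = some hs → edge T qp qm E x hs) ∧
    ∀ hs, (mset M hs).card ≤ cap T qp qm hs

/-- `(x, hs)` is a blocking pair for `M` in the reduced instance. -/
def blocksRed (T : ℕ) (qp qm : H → ℕ) (E : R → H → Prop) (rankR : R → H → ℕ)
    (rankH : H → R → ℕ) (M : Res R H T qp qm → Option (Hos H T qm))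
    (x : Res R H T qp qm) (hs : Hos H T qm) : Prop :=
  edge T qp qm E x hs ∧
    (∀ hs', M x = some hs' → prefRes T qp qm rankR x hs hs') ∧
    ((mset M hs).card < cap T qp qm hs ∨
      ∃ y ∈ mset M hs, prefHos T qp qm rankH hs x y)

/-- Stability in the reduced HR instance. -/
def stableRed (T : ℕ) (qp qm : H → ℕ) (E : R → H → Prop) (rankR : R → H → ℕ)
    (rankH : H → R → ℕ) (M : Res R H T qp qm → Option (Hos H T qm)) : Prop :=
  isMatchingRed T qp qm E M ∧ ∀ x hs, ¬ blocksRed T qp qm E rankR rankH M x hs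

/-- A hospital copy is active if it is matched to at least one non-dummy resident. -/
def active {T : ℕ} {qp qm : H → ℕ}
    (M : Res R H T qp qm → Option (Hos H T qm)) (hs : Hos H T qm) : Prop :=
  ∃ r : R, M (Sum.inl r) = some hs

/-- The matching of the original HRLQ instance obtained from a matching of the reduced
instance: `r` is matched to `h` iff `r` is matched to some level copy of `h`. -/
def mapToG {T : ℕ} {qp qm : H → ℕ}
    (M : Res R H T qp qm → Option (Hos H T qm)) : R → Option H :=
  fun r => (M (Sum.inl r)).map Prod.fst

/-- Set of residents matched to `h` in a matching of the original instance. -/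
noncomputable def msetO (N : R → Option H) (h : H) : Finset R :=
  univ.filter (fun r => N r = some h)

/-- Feasibility in the original HRLQ instance. -/
def feasibleO (E : R → H → Prop) (qp qm : H → ℕ) (N : R → Option H) : Prop :=
  (∀ r h, N r = some h → E r h) ∧
    ∀ h, qm h ≤ (msetO N h).card ∧ (msetO N h).card ≤ qp h

/-- Cardinality of a matching of the original instance. -/
noncomputable def sizeO (N : R → Option H) : ℕ :=
  (univ.filter (fun r : R => N r ≠ none)).card

/-- `r ∈ R_i`: `r` is matched to a level-`i` hospital copy (unmatched residents are in `R_0`). -/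
def inRlev {T : ℕ} {qp qm : H → ℕ}
    (M : Res R H T qp qm → Option (Hos H T qm)) (i : ℕ) (r : R) : Prop :=
  (∃ hs, M (Sum.inl r) = some hs ∧ hs.2.val = i) ∨ (M (Sum.inl r) = none ∧ i = 0)

/-- `h ∈ H_j`: the copy `h^j` is active (with the convention that a hospital matched to no
resident is placed in `H_{T-1}` if it has no lower quota and in `H_{ℓ-1}` otherwise). -/
def inHlev (T : ℕ) (qp qm : H → ℕ)
    (M : Res R H T qp qm → Option (Hos H T qm)) (j : ℕ) (h : H) : Prop :=
  (∃ s : Fin (ell H T qm), s.val = j ∧ active M (h, s)) ∨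
    ((∀ r, mapToG M r ≠ some h) ∧
      ((qm h = 0 ∧ j = T - 1) ∨ (0 < qm h ∧ j = ell H T qm - 1)))

/-- Residents matched to `h` in `Mo` but not in `N`. -/
noncomputable def Aset (Mo N : R → Option H) (h : H) : Finset R :=
  msetO Mo h \ msetO N h

/-- Residents matched to `h` in `N` but not in `Mo`. -/
noncomputable def Bset (Mo N : R → Option H) (h : H) : Finset R :=
  msetO N h \ msetO Mo h

/-- `σ h` is a correspondence chosen by hospital `h` between `N(h) ∖ Mo(h)` and
`Mo(h) ∖ N(h)`: it is injective, maps into `Mo(h) ∖ N(h)`, and pairs as many residents as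
possible (unpaired residents correspond to `⊥`). -/
def validCorr (Mo N : R → Option H) (σ : H → R → Option R) : Prop :=
  ∀ h,
    (∀ r' ∈ Bset Mo N h, ∀ r, σ h r' = some r → r ∈ Aset Mo N h) ∧
    (∀ r₁ ∈ Bset Mo N h, ∀ r₂ ∈ Bset Mo N h, ∀ r,
        σ h r₁ = some r → σ h r₂ = some r → r₁ = r₂) ∧
    ((∀ r ∈ Aset Mo N h, ∃ r' ∈ Bset Mo N h, σ h r' = some r) ∨
      (∀ r' ∈ Bset Mo N h, σ h r' ≠ none))

/-- The vote of resident `r` comparing partners `x` (in `N`) and `y` (in `Mo`):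
`1` if `r` prefers `x`, `-1` if `r` prefers `y`, `0` if they coincide. -/
noncomputable def rvote (rankR : R → H → ℕ) (r : R) (x y : Option H) : ℤ :=
  if x = y then 0
  else
    match x, y with
    | some a, some b => if rankR r a < rankR r b then 1 else -1
    | some _, none => 1
    | none, _ => -1

/-- The net vote of hospital `h` for `N` against `Mo`, given the correspondence `σ h`:
each resident of `N(h) ∖ Mo(h)` is compared with its corresponding resident of
`Mo(h) ∖ N(h)` (or with `⊥`), and each unpaired resident of `Mo(h) ∖ N(h)` contributes one
vote for `Mo`. -/
noncomputable def hvote (rankH : H → R → ℕ) (Mo N : R → Option H)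
    (σ : H → R → Option R) (h : H) : ℤ :=
  (∑ r' ∈ Bset Mo N h,
      (match σ h r' with
        | some r => if rankH h r' < rankH h r then (1 : ℤ) else -1
        | none => 1)) -
    ((Aset Mo N h).filter (fun r => ∀ r' ∈ Bset Mo N h, σ h r' ≠ some r)).card

/-- Total net vote for `N` against `Mo` (given correspondences `σ`). -/
noncomputable def totalVote (rankR : R → H → ℕ) (rankH : H → R → ℕ)
    (N Mo : R → Option H) (σ : H → R → Option R) : ℤ :=
  (∑ r : R, rvote rankR r (N r) (Mo r)) + ∑ h : H, hvote rankH Mo N σ h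

/-- `Mo` is popular among the feasible matchings of the HRLQ instance. -/
def popularAmongFeasible (E : R → H → Prop) (rankR : R → H → ℕ) (rankH : H → R → ℕ)
    (qp qm : H → ℕ) (Mo : R → Option H) : Prop :=
  ∀ N, feasibleO E qp qm N → ∀ σ, validCorr Mo N σ → totalVote rankR rankH N Mo σ ≤ 0


section Aux
set_option linter.unusedSectionVars false

variable {R H : Type} [Fintype H] [Fintype R]
variable {T : ℕ} {E : R → H → Prop} {rankR : R → H → ℕ} {rankH : H → R → ℕ} {qp qm : H → ℕ}
variable {M : Res R H T qp qm → Option (Hos H T qm)}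

lemma T_le_L : T ≤ ell H T qm := Nat.le_add_right _ _

lemma mem_mset' {x : Res R H T qp qm} {hs : Hos H T qm} :
    x ∈ mset M hs ↔ M x = some hs := by simp [mset]

lemma full_of_stable (hst : stableRed T qp qm E rankR rankH M)
    {x : Res R H T qp qm} {hs : Hos H T qm}
    (he : edge T qp qm E x hs)
    (hp : ∀ hs', M x = some hs' → prefRes T qp qm rankR x hs hs') :
    (mset M hs).card = cap T qp qm hs ∧
      ∀ y ∈ mset M hs, ¬ prefHos T qp qm rankH hs x y := by
  have hnb := hst.2 x hs
  have h3 : ¬ ((mset M hs).card < cap T qp qm hs ∨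
      ∃ y ∈ mset M hs, prefHos T qp qm rankH hs x y) :=
    fun hc => hnb ⟨he, hp, hc⟩
  push_neg at h3
  exact ⟨le_antisymm (hst.1.2 hs) h3.1, h3.2⟩

lemma dummy_ext' {d d' : Dummy H T qp qm}
    (h1 : d.h = d'.h) (h2 : d.s = d'.s) (h3 : d.i = d'.i) : d = d' := by
  obtain ⟨⟨a, s, i⟩, p⟩ := d
  obtain ⟨⟨a', s', i'⟩, p'⟩ := d'
  simp only [Dummy.h] at h1
  subst h1
  simp only [Dummy.s, Dummy.i] at h2 h3
  apply Subtype.ext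
  simp only [Sigma.mk.inj_iff, heq_eq_eq, Prod.mk.injEq]
  exact ⟨trivial, Fin.ext h2, Fin.ext h3⟩

/-- constructor for dummies -/
def mkD (h : H) (t : ℕ) (ht : t + 2 ≤ ell H T qm) (i : ℕ) (hi : i < qp h)
    (hi2 : T ≤ t → i < qm h) : Dummy H T qp qm :=
  ⟨⟨h, (⟨t, by omega⟩, ⟨i, hi⟩)⟩, ⟨by simp; omega, hi2⟩⟩

@[simp] lemma mkD_h (h : H) (t : ℕ) (ht : t + 2 ≤ ell H T qm) (i : ℕ) (hi : i < qp h)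
    (hi2 : T ≤ t → i < qm h) : (mkD h t ht i hi hi2 : Dummy H T qp qm).h = h := rfl

@[simp] lemma mkD_s (h : H) (t : ℕ) (ht : t + 2 ≤ ell H T qm) (i : ℕ) (hi : i < qp h)
    (hi2 : T ≤ t → i < qm h) : (mkD h t ht i hi hi2 : Dummy H T qp qm).s = t := rfl

@[simp] lemma mkD_i (h : H) (t : ℕ) (ht : t + 2 ≤ ell H T qm) (i : ℕ) (hi : i < qp h)
    (hi2 : T ≤ t → i < qm h) : (mkD h t ht i hi hi2 : Dummy H T qp qm).i = i := rfl

lemma hclass_inl' (hs : Hos H T qm) (r : R) :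
    hclass (T := T) (qp := qp) (qm := qm) hs (Sum.inl r) = 1 := rfl

lemma hclass_inr' (hs : Hos H T qm) (d : Dummy H T qp qm) :
    hclass (R := R) hs (Sum.inr d) =
      if d.h = hs.1 ∧ 1 ≤ hs.2.val ∧ d.s = hs.2.val - 1 then 0
      else if d.h = hs.1 ∧ d.s = hs.2.val then 2 else 3 := rfl

lemma hclass_up {d : Dummy H T qp qm} {hs : Hos H T qm}
    (hd : d.h = hs.1) (hsv : d.s + 1 = hs.2.val) : hclass (R := R) hs (Sum.inr d) = 0 := by
  rw [hclass_inr', if_pos]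
  exact ⟨hd, by omega, by omega⟩

lemma hclass_down {d : Dummy H T qp qm} {hs : Hos H T qm}
    (hd : d.h = hs.1) (hsv : d.s = hs.2.val) : hclass (R := R) hs (Sum.inr d) = 2 := by
  rw [hclass_inr', if_neg, if_pos]
  · exact ⟨hd, hsv⟩
  · rintro ⟨-, h1, h2⟩; omega

lemma edge_inl (r : R) (hs : Hos H T qm) :
    edge T qp qm E (Sum.inl r) hs ↔ E r hs.1 := Iff.rfl

lemma edge_inr (d : Dummy H T qp qm) (hs : Hos H T qm) :
    edge (R := R) T qp qm E (Sum.inr d) hs ↔ d.h = hs.1 ∧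
      (hs.2.val = d.s ∨
        (hs.2.val = d.s + 1 ∧ ¬(d.s = T - 1 ∧ d.i < qp hs.1 - qm hs.1))) := Iff.rfl

lemma prefRes_inl (r : R) (a b : Hos H T qm) :
    prefRes T qp qm rankR (Sum.inl r) a b ↔
      (b.2.val < a.2.val ∨ (a.2.val = b.2.val ∧ rankR r a.1 < rankR r b.1)) := Iff.rfl

lemma prefRes_inr (d : Dummy H T qp qm) (a b : Hos H T qm) :
    prefRes (R := R) T qp qm rankR (Sum.inr d) a b ↔ dkey d a < dkey d b := Iff.rfl

/-- Every non-restricted dummy is matched in a stable matching. -/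
lemma dummy_matched (hst : stableRed T qp qm E rankR rankH M) (hq : ∀ h, qm h ≤ qp h)
    (hT : 1 ≤ T) (d : Dummy H T qp qm)
    (hnr : ¬ (d.s = T - 1 ∧ d.i < qp d.h - qm d.h)) : M (Sum.inr d) ≠ none := by
  intro hnone
  have hiq : d.i < qp d.h := d.1.2.2.isLt
  have htL0 : d.s ≤ ell H T qm - 2 := d.2.1
  have hsL : d.s < ell H T qm := d.1.2.1.isLt
  have hL2 : 2 ≤ ell H T qm := by
    by_contra hc
    have hL1 : ell H T qm = 1 := by omega
    have hT1 : T = 1 ∧ ∑ h, qm h = 0 := by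
      have h' := hL1; unfold ell at h'; omega
    have hqm0 : qm d.h = 0 := (Finset.sum_eq_zero_iff.mp hT1.2) d.h (mem_univ _)
    exact hnr ⟨by omega, by omega⟩
  have ht2 : d.s + 2 ≤ ell H T qm := by omega
  set c1 : Hos H T qm := (d.h, ⟨d.s + 1, by omega⟩) with hc1
  have he : edge (R := R) T qp qm E (Sum.inr d) c1 := ⟨rfl, Or.inr ⟨rfl, hnr⟩⟩
  have hp : ∀ hs', M (Sum.inr d) = some hs' →
      prefRes T qp qm rankR (Sum.inr d) c1 hs' := by
    intro hs' h'; rw [hnone] at h'; exact absurd h' (by simp)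
  obtain ⟨hfull, hnw⟩ := full_of_stable hst he hp
  have hocc : ∀ y ∈ mset M c1, ∃ d' : Dummy H T qp qm, y = Sum.inr d' ∧ d'.h = d.h ∧
      d'.s = d.s ∧ d'.i < d.i ∧ ¬ (d'.s = T - 1 ∧ d'.i < qp d.h - qm d.h) := by
    intro y hy
    have hnp := hnw y hy
    unfold prefHos at hnp
    push_neg at hnp
    obtain ⟨hle, himp⟩ := hnp
    rw [hclass_up rfl rfl] at hle himp
    cases y with
    | inl r => rw [hclass_inl'] at hle; omega
    | inr d' =>
      have hcls : d'.h = c1.1 ∧ 1 ≤ (c1.2 : ℕ) ∧ d'.s = (c1.2 : ℕ) - 1 := by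
        by_contra hc
        rw [hclass_inr', if_neg hc] at hle
        split at hle <;> omega
      obtain ⟨hd'h, -, hd's⟩ := hcls
      have hc1v : (c1.2 : ℕ) = d.s + 1 := rfl
      have hd'h' : d'.h = d.h := hd'h
      have hd's' : d'.s = d.s := by omega
      have hmm : M (Sum.inr d') = some c1 := mem_mset'.mp hy
      have hne : d' ≠ d := by
        intro heq; rw [heq, hnone] at hmm; cases hmm
      have hii : d'.i ≠ d.i := fun hieq => hne (dummy_ext' hd'h' hd's' hieq)
      have hile : d'.i ≤ d.i := by
        have h2 := himp (by rw [hclass_inr', if_pos ⟨hd'h, by omega, hd's⟩])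
        exact h2
      have hedge := hst.1.1 _ _ hmm
      rw [edge_inr] at hedge
      have hres : ¬ (d'.s = T - 1 ∧ d'.i < qp d.h - qm d.h) := by
        rcases hedge.2 with hcase | hcase
        · omega
        · exact hcase.2
      exact ⟨d', rfl, hd'h', hd's', by omega, hres⟩
  have hinj : Set.InjOn (fun y : Res R H T qp qm => Sum.elim (fun _ => 0) Dummy.i y)
      (mset M c1) := by
    intro y1 h1 y2 h2 hfeq
    obtain ⟨d1, rfl, hh1, hs1, -, -⟩ := hocc y1 h1
    obtain ⟨d2, rfl, hh2, hs2, -, -⟩ := hocc y2 h2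
    simp only [Sum.elim_inr] at hfeq
    rw [dummy_ext' (d := d1) (d' := d2) (by rw [hh1, hh2]) (by rw [hs1, hs2]) hfeq]
  have hmaps_iio : ∀ y ∈ mset M c1,
      (Sum.elim (fun _ => 0) Dummy.i y) ∈ Finset.Iio d.i := by
    intro y hy
    obtain ⟨d', rfl, -, -, hlt, -⟩ := hocc y hy
    simpa using hlt
  by_cases h1T : d.s + 1 < T
  · have hcap : cap T qp qm c1 = qp d.h := if_pos h1T
    have hle : (mset M c1).card ≤ (Finset.Iio d.i).card :=
      Finset.card_le_card_of_injOn _ hmaps_iio hinj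
    rw [Nat.card_Iio] at hle
    omega
  · by_cases h2T : d.s < T
    · have hdsT : d.s = T - 1 := by omega
      have hcap : cap T qp qm c1 = qm d.h := by
        unfold cap; rw [if_neg]; exact h1T
      have hge : qp d.h - qm d.h ≤ d.i := by
        by_contra hc; exact hnr ⟨hdsT, by omega⟩
      have hle : (mset M c1).card ≤ (Finset.Ico (qp d.h - qm d.h) d.i).card := by
        apply Finset.card_le_card_of_injOn _ _ hinj
        intro y hy
        obtain ⟨d', rfl, -, hs', hlt, hres⟩ := hocc y hy
        simp only [Sum.elim_inr, Finset.mem_coe, Finset.mem_Ico]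
        refine ⟨?_, hlt⟩
        by_contra hc
        exact hres ⟨by omega, by omega⟩
      rw [Nat.card_Ico] at hle
      have := hq d.h
      omega
    · have hcap : cap T qp qm c1 = qm d.h := by
        unfold cap; rw [if_neg]
        exact fun hc => h2T (Nat.lt_of_succ_lt (show d.s + 1 < T from hc))
      have hiqm : d.i < qm d.h := d.2.2 (show T ≤ d.s by omega)
      have hle : (mset M c1).card ≤ (Finset.Iio d.i).card :=
        Finset.card_le_card_of_injOn _ hmaps_iio hinj
      rw [Nat.card_Iio] at hle
      omega

end Aux

section Aux2
set_option linter.unusedSectionVars false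

variable {R H : Type} [Fintype H] [Fintype R]
variable {T : ℕ} {E : R → H → Prop} {rankR : R → H → ℕ} {rankH : H → R → ℕ} {qp qm : H → ℕ}
variable {M : Res R H T qp qm → Option (Hos H T qm)}

noncomputable def Rmat (M : Res R H T qp qm → Option (Hos H T qm)) (hs : Hos H T qm) :
    Finset R := univ.filter (fun r => M (Sum.inl r) = some hs)

noncomputable def Dmat (M : Res R H T qp qm → Option (Hos H T qm)) (hs : Hos H T qm) :
    Finset (Dummy H T qp qm) := univ.filter (fun d => M (Sum.inr d) = some hs)

lemma mset_card_split (hs : Hos H T qm) :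
    (mset M hs).card = (Rmat M hs).card + (Dmat M hs).card := by
  have hdisj : Disjoint ((Rmat M hs).map ⟨Sum.inl, Sum.inl_injective⟩)
      ((Dmat M hs).map ⟨Sum.inr, Sum.inr_injective⟩) := by
    rw [Finset.disjoint_left]
    rintro x hx hx'
    simp only [Finset.mem_map, Function.Embedding.coeFn_mk] at hx hx'
    obtain ⟨r, -, rfl⟩ := hx
    obtain ⟨d, -, hd⟩ := hx'
    cases hd
  have hU : mset M hs = ((Rmat M hs).map ⟨Sum.inl, Sum.inl_injective⟩).disjUnion
      ((Dmat M hs).map ⟨Sum.inr, Sum.inr_injective⟩) hdisj := by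
    ext x
    refine Iff.trans ?_ Finset.mem_disjUnion.symm
    constructor
    · intro hx
      rw [mem_mset'] at hx
      cases x with
      | inl r => exact Or.inl (Finset.mem_map_of_mem _ (by simp [Rmat, hx]))
      | inr d => exact Or.inr (Finset.mem_map_of_mem _ (by simp [Dmat, hx]))
    · intro hx
      rw [mem_mset']
      rcases hx with hx | hx
      · obtain ⟨r, hr, heq⟩ := Finset.mem_map.mp hx
        subst heq
        exact (mem_filter.mp hr).2
      · obtain ⟨d, hd, heq⟩ := Finset.mem_map.mp hx
        subst heq
        exact (mem_filter.mp hd).2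
  rw [hU]
  exact (Finset.card_disjUnion _ _ _).trans (congrArg₂ (· + ·) (Finset.card_map _) (Finset.card_map _))

noncomputable def rcF (M : Res R H T qp qm → Option (Hos H T qm)) (h : H) (v : ℕ) :
    Finset R :=
  univ.filter (fun r => ∃ (hv : v < ell H T qm), M (Sum.inl r) = some (h, ⟨v, hv⟩))

noncomputable def dCF (M : Res R H T qp qm → Option (Hos H T qm)) (h : H) (t : ℕ) :
    Finset (Dummy H T qp qm) :=
  univ.filter (fun d => d.h = h ∧ d.s = t ∧
    ∃ (hv : t < ell H T qm), M (Sum.inr d) = some (h, ⟨t, hv⟩))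

noncomputable def uCF (M : Res R H T qp qm → Option (Hos H T qm)) (h : H) (t : ℕ) :
    Finset (Dummy H T qp qm) :=
  univ.filter (fun d => d.h = h ∧ d.s = t ∧
    ∃ (hv : t + 1 < ell H T qm), M (Sum.inr d) = some (h, ⟨t + 1, hv⟩))

lemma Rmat_eq (h : H) {v : ℕ} (hv : v < ell H T qm) :
    Rmat M (h, ⟨v, hv⟩) = rcF M h v := by
  ext r
  simp only [Rmat, rcF, mem_filter, mem_univ, true_and]
  exact ⟨fun h' => ⟨hv, h'⟩, fun ⟨hv', h'⟩ => h'⟩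

lemma Dmat_eq_zero (hst : stableRed T qp qm E rankR rankH M) (h : H)
    (h0 : 0 < ell H T qm) : Dmat M (h, ⟨0, h0⟩) = dCF M h 0 := by
  ext d
  simp only [Dmat, dCF, mem_filter, mem_univ, true_and]
  constructor
  · intro hm
    have he := hst.1.1 _ _ hm
    replace he := (edge_inr _ _).mp he
    have hd : d.s = 0 := by
      rcases he.2 with hcase | hcase
      · exact hcase.symm
      · have h01 : (0 : ℕ) = d.s + 1 := hcase.1
        omega
    exact ⟨he.1, hd, h0, hm⟩
  · rintro ⟨-, -, hv, hm⟩; exact hm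

lemma dCF_uCF_disjoint' (h : H) (t : ℕ) : Disjoint (dCF M h t) (uCF M h t) := by
  rw [Finset.disjoint_left]
  intro d h1 h2
  simp only [dCF, uCF, mem_filter, mem_univ, true_and] at h1 h2
  obtain ⟨-, -, hv1, hm1⟩ := h1
  obtain ⟨-, -, hv2, hm2⟩ := h2
  rw [hm1] at hm2
  have h3 := Option.some.inj hm2
  have hvv : t = t + 1 := congrArg (fun p : Hos H T qm => (p.2 : ℕ)) h3
  omega

lemma dCF_uCF_disjoint (h : H) {t u : ℕ} (hne : t ≠ u) :
    Disjoint (dCF M h t) (uCF M h u) := by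
  rw [Finset.disjoint_left]
  intro d h1 h2
  simp only [dCF, uCF, mem_filter, mem_univ, true_and] at h1 h2
  obtain ⟨-, e1, -⟩ := h1
  obtain ⟨-, e2, -⟩ := h2
  omega

lemma Dmat_card_succ (hst : stableRed T qp qm E rankR rankH M) (h : H) {t : ℕ}
    (hlt : t + 1 < ell H T qm) :
    (Dmat M (h, ⟨t + 1, hlt⟩)).card = (dCF M h (t + 1)).card + (uCF M h t).card := by
  have hU : Dmat M (h, ⟨t + 1, hlt⟩) =
      (dCF M h (t + 1)).disjUnion (uCF M h t) (dCF_uCF_disjoint h (by omega)) := by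
    ext d
    rw [Finset.mem_disjUnion]
    simp only [Dmat, dCF, uCF, mem_filter, mem_univ, true_and]
    constructor
    · intro hm
      have he := hst.1.1 _ _ hm
      replace he := (edge_inr _ _).mp he
      have hdh : d.h = h := he.1
      rcases he.2 with hcase | hcase
      · exact Or.inl ⟨hdh, hcase.symm, hlt, hm⟩
      · have hds : d.s = t := by
          have hx : t + 1 = d.s + 1 := hcase.1
          omega
        exact Or.inr ⟨hdh, hds, hlt, hm⟩
    · rintro (⟨-, -, hv, hm⟩ | ⟨-, -, hv, hm⟩) <;> exact hm
  rw [hU, Finset.card_disjUnion]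

lemma dAt_card {h : H} {t : ℕ} (htT : t < T) (htL : t + 2 ≤ ell H T qm) :
    (univ.filter (fun d : Dummy H T qp qm => d.h = h ∧ d.s = t)).card = qp h := by
  rw [← Finset.card_range (qp h)]
  refine Finset.card_bij' (fun d _ => d.i)
      (fun i hi => mkD h t htL i (Finset.mem_range.mp hi) (fun hTt => absurd hTt (by omega)))
      ?_ ?_ ?_ ?_
  · intro a ha
    simp only [mem_filter, mem_univ, true_and] at ha
    rw [Finset.mem_range]
    exact lt_of_lt_of_eq a.1.2.2.isLt (congrArg qp ha.1)
  · intro i hi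
    simp only [mem_filter, mem_univ, true_and]
    exact ⟨rfl, rfl⟩
  · intro a ha
    simp only [mem_filter, mem_univ, true_and] at ha
    exact dummy_ext' ha.1.symm ha.2.symm rfl
  · intro i hi
    rfl

lemma level_partition (hst : stableRed T qp qm E rankR rankH M) (hq : ∀ h, qm h ≤ qp h)
    (hT : 1 ≤ T) (h : H) {t : ℕ} (ht : t + 2 ≤ T) :
    qp h = (dCF M h t).card + (uCF M h t).card := by
  have htL : t + 2 ≤ ell H T qm := le_trans ht T_le_L
  have hdAt := dAt_card (qp := qp) (qm := qm) (h := h) (t := t) (by omega) htL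
  have hU : (univ.filter (fun d : Dummy H T qp qm => d.h = h ∧ d.s = t)) =
      (dCF M h t).disjUnion (uCF M h t) (dCF_uCF_disjoint' h t) := by
    ext d
    rw [Finset.mem_disjUnion]
    simp only [dCF, uCF, mem_filter, mem_univ, true_and]
    constructor
    · rintro ⟨hdh, hds⟩
      have hnr : ¬ (d.s = T - 1 ∧ d.i < qp d.h - qm d.h) := by
        rintro ⟨h1, -⟩; omega
      have hmne := dummy_matched hst hq hT d hnr
      obtain ⟨hs', hm'⟩ : ∃ hs', M (Sum.inr d) = some hs' :=
        Option.ne_none_iff_exists'.mp hmne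
      have he := hst.1.1 _ _ hm'
      rw [edge_inr] at he
      obtain ⟨a, b⟩ := hs'
      have h1 : d.h = a := he.1
      have ha : a = h := by rw [← h1]; exact hdh
      subst ha
      rcases he.2 with hcase | hcase
      · left
        have hbv : (b : ℕ) = d.s := hcase
        have hb : b = ⟨t, by omega⟩ := Fin.eq_mk_iff_val_eq.mpr (by omega)
        exact ⟨hdh, hds, by omega, by
          rw [hm']; exact congrArg some (congrArg (Prod.mk _) hb)⟩
      · right
        have hbv : (b : ℕ) = d.s + 1 := hcase.1
        have hb : b = ⟨t + 1, by omega⟩ := Fin.eq_mk_iff_val_eq.mpr (by omega)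
        exact ⟨hdh, hds, by omega, by
          rw [hm']; exact congrArg some (congrArg (Prod.mk _) hb)⟩
    · rintro (⟨hdh, hds, -⟩ | ⟨hdh, hds, -⟩) <;> exact ⟨hdh, hds⟩
  rw [← hdAt, hU, Finset.card_disjUnion]

lemma copy_full_of_up (hst : stableRed T qp qm E rankR rankH M) {h : H} {t : ℕ}
    (hlt : t + 1 < ell H T qm) (hlt' : t < ell H T qm)
    {d : Dummy H T qp qm} (hdh : d.h = h) (hds : d.s = t)
    (hdm : M (Sum.inr d) = some (h, ⟨t + 1, hlt⟩)) :
    (mset M (h, ⟨t, hlt'⟩)).card = cap T qp qm (h, ⟨t, hlt'⟩) := by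
  have he : edge (R := R) T qp qm E (Sum.inr d) (h, ⟨t, hlt'⟩) := by
    refine (edge_inr _ _).mpr ?_
    exact ⟨hdh, Or.inl hds.symm⟩
  have hp : ∀ hs', M (Sum.inr d) = some hs' →
      prefRes T qp qm rankR (Sum.inr d) (h, ⟨t, hlt'⟩) hs' := by
    intro hs' hm'
    rw [hdm] at hm'
    have hss : hs' = (h, ⟨t + 1, hlt⟩) := (Option.some.inj hm').symm
    subst hss
    refine (prefRes_inr _ _ _).mpr ?_
    unfold dkey
    rw [if_pos ⟨hdh.symm, hds.symm⟩, if_neg, if_pos ⟨hdh.symm, show t + 1 = d.s + 1 by omega⟩]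
    · omega
    · rintro ⟨-, hcc⟩
      have hcc' : t + 1 = d.s := hcc
      omega
  exact (full_of_stable hst he hp).1

lemma mapToG_some {r : R} {h : H} :
    mapToG M r = some h ↔ ∃ hs, M (Sum.inl r) = some hs ∧ hs.1 = h := by
  constructor
  · intro hm
    obtain ⟨hs, h1, h2⟩ := Option.map_eq_some_iff.mp hm
    exact ⟨hs, h1, h2⟩
  · rintro ⟨hs, h1, rfl⟩
    unfold mapToG; rw [h1]; rfl

lemma mapToG_none {r : R} : mapToG M r = none ↔ M (Sum.inl r) = none :=
  Option.map_eq_none_iff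

lemma sum_rc_le (h : H) (m : ℕ) :
    ∑ v ∈ Finset.range m, (rcF M h v).card ≤ (msetO (mapToG M) h).card := by
  rw [← Finset.card_biUnion]
  · apply Finset.card_le_card
    intro r hr
    simp only [Finset.mem_biUnion] at hr
    obtain ⟨v, -, hr⟩ := hr
    simp only [rcF, mem_filter, mem_univ, true_and] at hr
    obtain ⟨hv, hm⟩ := hr
    simp only [msetO, mem_filter, mem_univ, true_and]
    rw [mapToG_some]
    exact ⟨_, hm, rfl⟩
  · intro v1 hv1m v2 hv2m hne
    rw [Function.onFun, Finset.disjoint_left]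
    intro r h1 h2
    simp only [rcF, mem_filter, mem_univ, true_and] at h1 h2
    obtain ⟨hv1, hm1⟩ := h1
    obtain ⟨hv2, hm2⟩ := h2
    rw [hm1] at hm2
    have := Option.some.inj hm2
    have hvv := congrArg (fun p : Hos H T qm => (p.2 : ℕ)) this
    simp only [] at hvv
    exact hne hvv

end Aux2

section Aux3
set_option linter.unusedSectionVars false

variable {R H : Type} [Fintype H] [Fintype R]
variable {T : ℕ} {E : R → H → Prop} {rankR : R → H → ℕ} {rankH : H → R → ℕ} {qp qm : H → ℕ}
variable {M : Res R H T qp qm → Option (Hos H T qm)}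

lemma res_stab (hst : stableRed T qp qm E rankR rankH M) {r : R} {h : H} (hE : E r h)
    (b : ℕ)
    (hb : (M (Sum.inl r) = none ∧ b = 0) ∨
      ∃ hs', M (Sum.inl r) = some hs' ∧ b = hs'.2.val + 1)
    (ft : Fin (ell H T qm)) (hft : b ≤ ft.val) :
    (mset M (h, ft)).card = cap T qp qm (h, ft) ∧
      ∀ y ∈ mset M (h, ft), hclass (R := R) (h, ft) y ≤ 1 := by
  have he : edge (R := R) T qp qm E (Sum.inl r) (h, ft) := hE
  have hp : ∀ hs', M (Sum.inl r) = some hs' →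
      prefRes T qp qm rankR (Sum.inl r) (h, ft) hs' := by
    intro hs' hm'
    rcases hb with ⟨hn, -⟩ | ⟨hs'', hm'', hbv⟩
    · rw [hn] at hm'; exact absurd hm' (by simp)
    · rw [hm''] at hm'
      have heq : hs'' = hs' := Option.some.inj hm'
      subst heq
      refine (prefRes_inl _ _ _).mpr ?_
      left
      show hs''.2.val < ft.val
      omega
  obtain ⟨h1, h2⟩ := full_of_stable hst he hp
  refine ⟨h1, fun y hy => ?_⟩
  have h3 := h2 y hy
  unfold prefHos at h3
  push_neg at h3
  have h4 := h3.1
  exact h4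

lemma dCF_empty_of_stab {h : H} {ft : Fin (ell H T qm)}
    (hcls : ∀ y ∈ mset M (h, ft), hclass (R := R) (h, ft) y ≤ 1) :
    dCF M h ft.val = ∅ := by
  rw [Finset.eq_empty_iff_forall_notMem]
  intro d hd
  simp only [dCF, mem_filter, mem_univ, true_and] at hd
  obtain ⟨hdh, hds, hv, hm⟩ := hd
  have hmem : Sum.inr d ∈ mset M (h, ft) := mem_mset'.mpr hm
  have h5 := hcls _ hmem
  replace h5 := (hclass_down (R := R) (hs := (h, ft)) hdh hds).symm.trans_le h5
  omega

lemma uCF_big (hst : stableRed T qp qm E rankR rankH M) (hq : ∀ h, qm h ≤ qp h)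
    (hT : 1 ≤ T) {h : H} {u : ℕ} (huL : u + 2 ≤ ell H T qm)
    (hd0 : dCF M h u = ∅) :
    ∀ d : Dummy H T qp qm, d.h = h → d.s = u →
      ¬ (d.s = T - 1 ∧ d.i < qp h - qm h) → d ∈ uCF M h u := by
  intro d hdh hds hnr
  have hmne := dummy_matched hst hq hT d (by rw [hdh]; exact hnr)
  obtain ⟨hs', hm'⟩ := Option.ne_none_iff_exists'.mp hmne
  have he := hst.1.1 _ _ hm'
  rw [edge_inr] at he
  obtain ⟨a, b⟩ := hs'
  have h1 : d.h = a := he.1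
  have ha : a = h := by rw [← h1]; exact hdh
  rcases he.2 with hcase | hcase
  · exfalso
    have hbv : (b : ℕ) = d.s := hcase
    have hd : d ∈ dCF M h u := by
      simp only [dCF, mem_filter, mem_univ, true_and]
      refine ⟨hdh, hds, by omega, ?_⟩
      rw [ha] at hm'
      rw [hm']
      exact congrArg some (congrArg (Prod.mk _) (Fin.eq_mk_iff_val_eq.mpr (by omega)))
    rw [hd0] at hd
    exact absurd hd (Finset.notMem_empty d)
  · have hbv : (b : ℕ) = d.s + 1 := hcase.1
    simp only [uCF, mem_filter, mem_univ, true_and]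
    refine ⟨hdh, hds, by omega, ?_⟩
    rw [ha] at hm'
    rw [hm']
    exact congrArg some (congrArg (Prod.mk _) (Fin.eq_mk_iff_val_eq.mpr (by omega)))

lemma cap_le_uCF (hst : stableRed T qp qm E rankR rankH M) (hq : ∀ h, qm h ≤ qp h)
    (hT : 1 ≤ T) {h : H} {u : ℕ} (hlt : u + 1 < ell H T qm)
    (hd0 : dCF M h u = ∅) :
    cap T qp qm (h, ⟨u + 1, hlt⟩) ≤ (uCF M h u).card := by
  have huL : u + 2 ≤ ell H T qm := by omega
  by_cases h1 : u + 1 < T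
  · have hcap : cap T qp qm (h, (⟨u + 1, hlt⟩ : Fin (ell H T qm))) = qp h := by
      unfold cap; rw [if_pos (show u + 1 < T from h1)]
    rw [hcap]
    rw [← Finset.card_range (qp h)]
    apply Finset.card_le_card_of_surjOn Dummy.i
    intro i hi
    rw [Finset.coe_range] at hi
    have hiq : i < qp h := hi
    have hmem := uCF_big hst hq hT huL hd0
      (mkD h u huL i hiq (fun hTu => absurd hTu (by omega))) rfl rfl
      (by rw [mkD_s, mkD_i]; rintro ⟨e1, e2⟩; omega)
    exact ⟨_, hmem, rfl⟩
  · by_cases h2 : u < T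
    · -- u = T - 1
      have hcap : cap T qp qm (h, (⟨u + 1, hlt⟩ : Fin (ell H T qm))) = qm h := by
        unfold cap; rw [if_neg (show ¬ (u + 1 < T) from h1)]
      rw [hcap]
      have hqh := hq h
      have hcard : (Finset.Ico (qp h - qm h) (qp h)).card = qm h := by
        rw [Nat.card_Ico]; omega
      rw [← hcard]
      apply Finset.card_le_card_of_surjOn Dummy.i
      intro i hi
      rw [Finset.coe_Ico] at hi
      obtain ⟨hge, hiq⟩ := hi
      have hmem := uCF_big hst hq hT huL hd0
        (mkD h u huL i hiq (fun hTu => absurd hTu (by omega))) rfl rfl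
        (by rw [mkD_s, mkD_i]; rintro ⟨e1, e2⟩; omega)
      exact ⟨_, hmem, rfl⟩
    · -- T ≤ u
      have hcap : cap T qp qm (h, (⟨u + 1, hlt⟩ : Fin (ell H T qm))) = qm h := by
        unfold cap; rw [if_neg (show ¬ (u + 1 < T) from h1)]
      rw [hcap]
      rw [← Finset.card_range (qm h)]
      apply Finset.card_le_card_of_surjOn Dummy.i
      intro i hi
      rw [Finset.coe_range] at hi
      have hiq : i < qm h := hi
      have hmem := uCF_big hst hq hT huL hd0
        (mkD h u huL i (lt_of_lt_of_le hiq (hq h)) (fun _ => hiq)) rfl rfl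
        (by rw [mkD_s, mkD_i]; rintro ⟨e1, e2⟩; omega)
      exact ⟨_, hmem, rfl⟩

lemma no_res_high (hst : stableRed T qp qm E rankR rankH M) (hq : ∀ h, qm h ≤ qp h)
    (hT : 1 ≤ T) {r' : R} {h : H} (hE : E r' h) {b : ℕ}
    (hb : (M (Sum.inl r') = none ∧ b = 0) ∨
      ∃ hs', M (Sum.inl r') = some hs' ∧ b = hs'.2.val + 1)
    {ft : Fin (ell H T qm)} (hft : b + 1 ≤ ft.val) (r'' : R) :
    M (Sum.inl r'') ≠ some (h, ft) := by
  intro hm''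
  have hftL : ft.val < ell H T qm := ft.isLt
  set u : ℕ := ft.val - 1 with hu
  have hftv : ft.val = u + 1 := by omega
  have hlt : u + 1 < ell H T qm := by omega
  have huL : u < ell H T qm := by omega
  have hftmk : ft = ⟨u + 1, hlt⟩ := Fin.eq_mk_iff_val_eq.mpr hftv
  obtain ⟨hfull, hcls⟩ := res_stab hst hE b hb ft (by omega)
  obtain ⟨-, hclsu⟩ := res_stab hst hE b hb ⟨u, huL⟩ (by
    show b ≤ u
    omega)
  have hd0u : dCF M h u = ∅ := dCF_empty_of_stab hclsu
  have hcap : cap T qp qm (h, ⟨u + 1, hlt⟩) ≤ (uCF M h u).card :=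
    cap_le_uCF hst hq hT hlt hd0u
  have hsub : insert (Sum.inl r'') ((uCF M h u).map ⟨Sum.inr, Sum.inr_injective⟩) ⊆
      mset M (h, ft) := by
    intro y hy
    rw [Finset.mem_insert] at hy
    rcases hy with rfl | hy
    · exact mem_mset'.mpr hm''
    · obtain ⟨d, hd, heq⟩ := Finset.mem_map.mp hy
      subst heq
      simp only [uCF, mem_filter, mem_univ, true_and] at hd
      obtain ⟨-, -, hv, hmm⟩ := hd
      refine mem_mset'.mpr ?_
      show M (Sum.inr d) = some (h, ft)
      rw [hmm, hftmk]
  have hnotin : (Sum.inl r'' : Res R H T qp qm) ∉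
      (uCF M h u).map ⟨Sum.inr, Sum.inr_injective⟩ := by
    intro hmem
    obtain ⟨d, -, heq⟩ := Finset.mem_map.mp hmem
    cases heq
  have hbig := Finset.card_le_card hsub
  rw [Finset.card_insert_of_notMem hnotin, Finset.card_map] at hbig
  replace hbig := hbig.trans_eq hfull
  rw [hftmk] at hbig
  omega

lemma cascade (hst : stableRed T qp qm E rankR rankH M) (hq : ∀ h, qm h ≤ qp h)
    (hT : 1 ≤ T) (h : H) :
    ∀ t : ℕ, t + 2 ≤ T →
      (uCF M h t).card ≤ ∑ v ∈ Finset.range (t + 1), (rcF M h v).card := by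
  intro t
  induction t with
  | zero =>
    intro ht
    rcases Finset.eq_empty_or_nonempty (uCF M h 0) with he | ⟨d, hd⟩
    · simp [he]
    · simp only [uCF, mem_filter, mem_univ, true_and] at hd
      obtain ⟨hdh, hds, hv, hm⟩ := hd
      have h0L : (0:ℕ) < ell H T qm := by omega
      have hfull := copy_full_of_up hst hv h0L hdh hds hm
      have hsplit := mset_card_split (M := M) (h, ⟨0, h0L⟩)
      have hdz := Dmat_eq_zero hst h h0L
      have hlp := level_partition hst hq hT h (t := 0) (by omega)
      have hcap : cap T qp qm (h, (⟨0, h0L⟩ : Fin (ell H T qm))) = qp h := by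
        unfold cap; rw [if_pos (show (0:ℕ) < T by omega)]
      have hrm := Rmat_eq (M := M) h h0L
      rw [Finset.sum_range_one]
      rw [hfull, hcap, hdz, hrm] at hsplit
      omega
  | succ t ih =>
    intro ht
    rcases Finset.eq_empty_or_nonempty (uCF M h (t + 1)) with he | ⟨d, hd⟩
    · simp [he]
    · simp only [uCF, mem_filter, mem_univ, true_and] at hd
      obtain ⟨hdh, hds, hv, hm⟩ := hd
      have htL : t + 1 < ell H T qm := by omega
      have hfull := copy_full_of_up hst hv htL hdh hds hm
      have hsplit := mset_card_split (M := M) (h, ⟨t + 1, htL⟩)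
      have hdsucc := Dmat_card_succ hst h htL
      have hlp := level_partition hst hq hT h (t := t + 1) (by omega)
      have hcap : cap T qp qm (h, (⟨t + 1, htL⟩ : Fin (ell H T qm))) = qp h := by
        unfold cap; rw [if_pos (show t + 1 < T by omega)]
      have hrm := Rmat_eq (M := M) h htL
      have hih := ih (by omega)
      rw [Finset.sum_range_succ]
      rw [hfull, hcap, hdsucc, hrm] at hsplit
      omega

lemma full_of_low (hst : stableRed T qp qm E rankR rankH M) (hq : ∀ h, qm h ≤ qp h)
    (hT : 1 ≤ T) {r : R} {h : H} (hE : E r h)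
    {hs' : Hos H T qm} (hm : M (Sum.inl r) = some hs') (hlev : hs'.2.val + 2 ≤ T) :
    qp h ≤ (msetO (mapToG M) h).card := by
  have hTL : T ≤ ell H T qm := T_le_L
  have hsL : hs'.2.val + 1 < ell H T qm := by omega
  obtain ⟨hfull, hcls⟩ := res_stab hst hE (hs'.2.val + 1) (Or.inr ⟨hs', hm, rfl⟩)
    ⟨hs'.2.val + 1, hsL⟩ le_rfl
  have hd0 : dCF M h (hs'.2.val + 1) = ∅ := dCF_empty_of_stab hcls
  have hsplit := mset_card_split (M := M) (h, ⟨hs'.2.val + 1, hsL⟩)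
  have hdsucc := Dmat_card_succ hst h hsL
  have hcap : cap T qp qm (h, (⟨hs'.2.val + 1, hsL⟩ : Fin (ell H T qm))) = qp h := by
    unfold cap; rw [if_pos (show hs'.2.val + 1 < T by omega)]
  have hrm := Rmat_eq (M := M) h hsL
  have hcas := cascade hst hq hT h hs'.2.val (by omega)
  have hsum := sum_rc_le (M := M) h (hs'.2.val + 2)
  rw [hfull, hcap, hdsucc, hrm, hd0] at hsplit
  simp only [Finset.card_empty] at hsplit
  rw [show hs'.2.val + 2 = (hs'.2.val + 1) + 1 from rfl, Finset.sum_range_succ] at hsum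
  omega

lemma full_of_unmatched (hst : stableRed T qp qm E rankR rankH M)
    (hT : 1 ≤ T) {r : R} {h : H} (hE : E r h)
    (hm : M (Sum.inl r) = none) : qp h ≤ (msetO (mapToG M) h).card := by
  have hTL : T ≤ ell H T qm := T_le_L
  have h0L : (0:ℕ) < ell H T qm := by omega
  obtain ⟨hfull, hcls⟩ := res_stab hst hE 0 (Or.inl ⟨hm, rfl⟩) ⟨0, h0L⟩ (Nat.zero_le _)
  have hd0 : dCF M h 0 = ∅ := dCF_empty_of_stab hcls
  have hsplit := mset_card_split (M := M) (h, ⟨0, h0L⟩)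
  have hdz := Dmat_eq_zero hst h h0L
  have hcap : cap T qp qm (h, (⟨0, h0L⟩ : Fin (ell H T qm))) = qp h := by
    unfold cap; rw [if_pos (show (0:ℕ) < T by omega)]
  have hrm := Rmat_eq (M := M) h h0L
  have hsum := sum_rc_le (M := M) h 1
  rw [hfull, hcap, hdz, hd0, hrm] at hsplit
  simp only [Finset.card_empty] at hsplit
  rw [Finset.sum_range_one] at hsum
  omega

end Aux3

section Aux4
set_option linter.unusedSectionVars false

variable {R H : Type} [Fintype H] [Fintype R]
variable {T : ℕ} {E : R → H → Prop} {rankR : R → H → ℕ} {rankH : H → R → ℕ} {qp qm : H → ℕ}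
variable {M : Res R H T qp qm → Option (Hos H T qm)}

noncomputable def RRd (M : Res R H T qp qm → Option (Hos H T qm)) (N : R → Option H) :
    ℕ → Finset R
  | 0 => univ.filter (fun r => M (Sum.inl r) = none)
  | k + 1 => RRd M N k ∪
      univ.filter (fun r => ∃ r' ∈ RRd M N k, ∃ h, N r' = some h ∧ mapToG M r = some h)

lemma RRd_zero_subset (N : R → Option H) : ∀ m, RRd M N 0 ⊆ RRd M N m := by
  intro m
  induction m with
  | zero => exact subset_rfl
  | succ m ih =>
    refine ih.trans ?_
    simp only [RRd]
    exact Finset.subset_union_left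

lemma RRd_lev (hst : stableRed T qp qm E rankR rankH M) (hq : ∀ h, qm h ≤ qp h)
    (hT : 1 ≤ T) {N : R → Option H} (hN : feasibleO E qp qm N) :
    ∀ k, ∀ r ∈ RRd M N k, M (Sum.inl r) = none ∨
      ∃ hs, M (Sum.inl r) = some hs ∧ hs.2.val + 1 ≤ k := by
  intro k
  induction k with
  | zero =>
    intro r hr
    simp only [RRd, mem_filter, mem_univ, true_and] at hr
    exact Or.inl hr
  | succ k ih =>
    intro r hr
    simp only [RRd] at hr
    rw [Finset.mem_union] at hr
    rcases hr with hr | hr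
    · rcases ih r hr with h0 | ⟨hs, h1, h2⟩
      · exact Or.inl h0
      · exact Or.inr ⟨hs, h1, by omega⟩
    · simp only [mem_filter, mem_univ, true_and] at hr
      obtain ⟨r', hr', h, hNr', hmap⟩ := hr
      obtain ⟨hs, hm, hfst⟩ := mapToG_some.mp hmap
      refine Or.inr ⟨hs, hm, ?_⟩
      have hE : E r' h := hN.1 r' h hNr'
      by_contra hc
      push_neg at hc
      rcases ih r' hr' with h0 | ⟨hs'', hm'', hlev⟩
      · refine no_res_high hst hq hT hE (b := 0) (Or.inl ⟨h0, rfl⟩)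
          (ft := hs.2) (by omega) r ?_
        rw [hm, ← hfst]
        rfl
      · refine no_res_high hst hq hT hE (b := hs''.2.val + 1) (Or.inr ⟨hs'', hm'', rfl⟩)
          (ft := hs.2) (by omega) r ?_
        rw [hm, ← hfst]
        rfl

lemma RRd_exists_fix (M : Res R H T qp qm → Option (Hos H T qm)) (N : R → Option H) :
    ∃ k, (RRd M N (k + 1) = RRd M N k) ∧
      (RRd M N 0 = ∅ ∧ k = 0 ∨ k + 1 ≤ Fintype.card R) := by
  by_cases h0 : RRd M N 0 = ∅
  · refine ⟨0, ?_, Or.inl ⟨h0, rfl⟩⟩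
    have h0' : univ.filter (fun r : R => M (Sum.inl r) = none) = ∅ := h0
    simp only [RRd]
    apply Finset.Subset.antisymm
    · intro r hr
      rw [Finset.mem_union] at hr
      rcases hr with hr | hr
      · exact hr
      · simp only [mem_filter, mem_univ, true_and] at hr
        obtain ⟨r', hr', -⟩ := hr
        exact absurd (mem_filter.mpr ⟨mem_univ r', hr'⟩)
          (Finset.eq_empty_iff_forall_notMem.mp h0' r')
    · intro r hr
      rw [Finset.mem_union]
      exact Or.inl hr
  · by_contra hc
    push_neg at hc
    have hne : ∀ k, k + 1 ≤ Fintype.card R → RRd M N (k + 1) ≠ RRd M N k := by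
      intro k hk heq
      have := (hc k heq).2
      omega
    have hgrow : ∀ k, k + 1 ≤ Fintype.card R → RRd M N k ⊂ RRd M N (k + 1) := by
      intro k hk
      refine Finset.ssubset_iff_subset_ne.mpr ⟨?_, ?_⟩
      · simp only [RRd]
        exact Finset.subset_union_left
      · exact fun heq => hne k hk heq.symm
    have hcard : ∀ k, k ≤ Fintype.card R → k + 1 ≤ (RRd M N k).card := by
      intro k
      induction k with
      | zero =>
        intro _
        exact Finset.card_pos.mpr (Finset.nonempty_iff_ne_empty.mpr h0)
      | succ k ih =>
        intro hk
        have h1 := ih (by omega)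
        have h2 := Finset.card_lt_card (hgrow k hk)
        omega
    have h3 := hcard (Fintype.card R) le_rfl
    have h4 := Finset.card_le_univ (RRd M N (Fintype.card R))
    omega

end Aux4

end HRLQ

open HRLQ Finset

/-- In the modified reduction `G''` with `ℓ = |R| + Σ_h q⁻(h)` levels (capacities `q⁺(h)` at
levels `0,…,|R|-1` and `q⁻(h)` at levels `|R|,…,ℓ-1`), the matching `M = map M''` obtained
from any stable matching `M''` of `G''` is a maximum-cardinality feasible matching: there is
no feasible matching `N` of `G` with `|N| > |M|`. -/
theorem statement15 {R H : Type} [Fintype R] [Fintype H]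
    (E : R → H → Prop) (rankR : R → H → ℕ) (rankH : H → R → ℕ) (qp qm : H → ℕ)
    (hq : ∀ h, qm h ≤ qp h)
    (M : Res R H (Fintype.card R) qp qm → Option (Hos H (Fintype.card R) qm))
    (hst : stableRed (Fintype.card R) qp qm E rankR rankH M)
    (N : R → Option H) (hN : feasibleO E qp qm N) :
    sizeO N ≤ sizeO (mapToG M) := by
  classical
  obtain ⟨k, hfix, hside⟩ := RRd_exists_fix M N
  have hclosure : ∀ r' ∈ RRd M N k, ∀ h : H, N r' = some h →
      ∀ r : R, mapToG M r = some h → r ∈ RRd M N k := by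
    intro r' hr' h hN' r hmap
    have hmem : r ∈ RRd M N (k + 1) := by
      simp only [RRd]
      rw [Finset.mem_union]
      exact Or.inr (by
        simp only [mem_filter, mem_univ, true_and]
        exact ⟨r', hr', h, hN', hmap⟩)
    rwa [hfix] at hmem
  have hbase : ∀ r : R, r ∉ RRd M N k → M (Sum.inl r) ≠ none := by
    intro r hr hnone
    apply hr
    apply RRd_zero_subset N k
    simp only [RRd, mem_filter, mem_univ, true_and]
    exact hnone
  have hfullH : ∀ h : H, (∃ r ∈ RRd M N k, N r = some h) →
      qp h ≤ (msetO (mapToG M) h).card := by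
    rintro h ⟨r, hrRR, hNr⟩
    have hE : E r h := hN.1 r h hNr
    have hT1 : 1 ≤ Fintype.card R := Fintype.card_pos_iff.mpr ⟨r⟩
    rcases hside with ⟨hemp, hk0⟩ | hkT
    · exfalso
      rw [hk0, hemp] at hrRR
      exact Finset.notMem_empty r hrRR
    · rcases RRd_lev hst hq hT1 hN k r hrRR with h0 | ⟨hs, hm, hl⟩
      · exact full_of_unmatched hst hT1 hE h0
      · exact full_of_low hst hq hT1 hE hm (by omega)
  set HH : Finset H := univ.filter (fun h => ∃ r ∈ RRd M N k, N r = some h) with hHH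
  have hsplitN : sizeO N =
      ((univ.filter (fun r : R => N r ≠ none)).filter (fun r => r ∈ RRd M N k)).card +
      ((univ.filter (fun r : R => N r ≠ none)).filter (fun r => ¬ r ∈ RRd M N k)).card := by
    unfold sizeO
    exact (Finset.card_filter_add_card_filter_not _).symm
  have hsplitM : sizeO (mapToG M) =
      ((univ.filter (fun r : R => mapToG M r ≠ none)).filter (fun r => r ∈ RRd M N k)).card +
      ((univ.filter (fun r : R => mapToG M r ≠ none)).filter (fun r => ¬ r ∈ RRd M N k)).card := by
    unfold sizeO
    exact (Finset.card_filter_add_card_filter_not _).symm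
  have hY : ((univ.filter (fun r : R => N r ≠ none)).filter (fun r => ¬ r ∈ RRd M N k)) ⊆
      ((univ.filter (fun r : R => mapToG M r ≠ none)).filter (fun r => ¬ r ∈ RRd M N k)) := by
    intro r hr
    simp only [mem_filter, mem_univ, true_and] at hr ⊢
    refine ⟨?_, hr.2⟩
    intro hnone
    exact hbase r hr.2 (mapToG_none.mp hnone)
  have hX : ((univ.filter (fun r : R => N r ≠ none)).filter (fun r => r ∈ RRd M N k)) ⊆
      HH.biUnion (fun h => msetO N h) := by
    intro r hr
    simp only [mem_filter, mem_univ, true_and] at hr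
    obtain ⟨hNr, hrRR⟩ := hr
    obtain ⟨h, hNh⟩ := Option.ne_none_iff_exists'.mp hNr
    rw [Finset.mem_biUnion]
    refine ⟨h, ?_, ?_⟩
    · rw [hHH]
      simp only [mem_filter, mem_univ, true_and]
      exact ⟨r, hrRR, hNh⟩
    · simp only [msetO, mem_filter, mem_univ, true_and]
      exact hNh
  have hX1 : (HH.biUnion (fun h => msetO N h)).card ≤ ∑ h ∈ HH, (msetO N h).card :=
    Finset.card_biUnion_le
  have hX2 : ∑ h ∈ HH, (msetO N h).card ≤ ∑ h ∈ HH, qp h :=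
    Finset.sum_le_sum (fun h _ => (hN.2 h).2)
  have hX3 : ∑ h ∈ HH, qp h ≤ ∑ h ∈ HH, (msetO (mapToG M) h).card := by
    apply Finset.sum_le_sum
    intro h hh
    rw [hHH] at hh
    simp only [mem_filter, mem_univ, true_and] at hh
    exact hfullH h hh
  have hX4 : ∑ h ∈ HH, (msetO (mapToG M) h).card =
      (HH.biUnion (fun h => msetO (mapToG M) h)).card := by
    rw [Finset.card_biUnion]
    intro h1 hh1 h2 hh2 hne
    rw [Function.onFun, Finset.disjoint_left]
    intro r hr1 hr2
    simp only [msetO, mem_filter, mem_univ, true_and] at hr1 hr2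
    rw [hr1] at hr2
    exact hne (Option.some.inj hr2)
  have hX5 : HH.biUnion (fun h => msetO (mapToG M) h) ⊆
      ((univ.filter (fun r : R => mapToG M r ≠ none)).filter (fun r => r ∈ RRd M N k)) := by
    intro r hr
    rw [Finset.mem_biUnion] at hr
    obtain ⟨h, hh, hr⟩ := hr
    simp only [msetO, mem_filter, mem_univ, true_and] at hr
    rw [hHH] at hh
    simp only [mem_filter, mem_univ, true_and] at hh
    simp only [mem_filter, mem_univ, true_and]
    constructor
    · rw [hr]; simp
    · obtain ⟨r', hr', hNr'⟩ := hh
      exact hclosure r' hr' h hNr' r hr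
  rw [hsplitN, hsplitM]
  have c1 := Finset.card_le_card hX
  have c2 := Finset.card_le_card hY
  have c3 := Finset.card_le_card hX5
  omega
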